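/- Let X be a nonnegative integer-valued random variable equal to the number of closed trails of length at most 2i in G ∈ G_{n₁,n₂,p}, where n₂ = Θ(n₁) and (n₁n₂)^{−i/(2i+1)} ≪ p ≪ (n₁n₂)^{−(i−1)/(2i−1)} for a fixed integer i ≥ 2. Then for every fixed δ > 0, P(X ≥ δ·p·n₁·n₂) → 0 as n₁ → ∞. -/

import Mathlib

open MeasureTheory Filter
open scoped ENNReal NNReal

/-- The Bernoulli measure on `Bool` with success probability `p`. -/
noncomputable def bern (p : ℝ) : Measure Bool :=
  (ENNReal.ofReal (1 - p)) • Measure.dirac false + (ENNReal.ofReal p) • Measure.dirac true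

/-- The random bipartite graph `G_{n₁,n₂,p}`. -/
noncomputable def bipMeasure (n₁ n₂ : ℕ) (p : ℝ) :
    Measure (Fin n₁ × Fin n₂ → Bool) :=
  Measure.pi fun _ => bern p

/-- Cyclic successor on `Fin j`. -/
def cyc {j : ℕ} (t : Fin j) : Fin j :=
  ⟨((t : ℕ) + 1) % j, Nat.mod_lt _ (Nat.lt_of_le_of_lt (Nat.zero_le _) t.isLt)⟩

/-- The number of (cyclically indexed representations of) closed trails of
length `2j` in a sample of the random bipartite graph. -/
noncomputable def trailCount {n₁ n₂ : ℕ} (j : ℕ) (ω : Fin n₁ × Fin n₂ → Bool) : ℕ :=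
  Nat.card {xy : (Fin j → Fin n₁) × (Fin j → Fin n₂) //
    Function.Injective (Sum.elim (fun t => (xy.1 t, xy.2 t))
      (fun t => (xy.1 (cyc t), xy.2 t)) : Fin j ⊕ Fin j → Fin n₁ × Fin n₂) ∧
    ∀ t : Fin j, ω (xy.1 t, xy.2 t) = true ∧ ω (xy.1 (cyc t), xy.2 t) = true}

lemma bern_true {p : ℝ} : bern p {true} = ENNReal.ofReal p := by
  simp [bern, Measure.dirac_apply]

lemma bern_isProb {p : ℝ} (h0 : 0 ≤ p) (h1 : p ≤ 1) : IsProbabilityMeasure (bern p) := by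
  constructor
  simp only [bern, Measure.coe_add, Measure.coe_smul, Pi.add_apply, Pi.smul_apply,
    Measure.dirac_apply_of_mem (Set.mem_univ _), smul_eq_mul, mul_one]
  rw [← ENNReal.ofReal_add (by linarith) h0]
  norm_num

lemma bipMeasure_forall_true (n₁ n₂ : ℕ) {p : ℝ} (h0 : 0 ≤ p) (h1 : p ≤ 1)
    (S : Finset (Fin n₁ × Fin n₂)) :
    bipMeasure n₁ n₂ p {ω | ∀ e ∈ S, ω e = true} = ENNReal.ofReal p ^ S.card := by
  classical
  haveI := bern_isProb h0 h1
  have hset : {ω : Fin n₁ × Fin n₂ → Bool | ∀ e ∈ S, ω e = true}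
      = Set.univ.pi (fun e => if e ∈ S then ({true} : Set Bool) else Set.univ) := by
    ext ω
    simp only [Set.mem_setOf_eq, Set.mem_pi, Set.mem_univ, forall_true_left]
    constructor
    · intro h e
      by_cases he : e ∈ S <;> simp [he, h e]
    · intro h e he
      have := h e
      simpa [he] using this
  rw [bipMeasure, hset, Measure.pi_pi]
  have : ∀ e : Fin n₁ × Fin n₂,
      bern p (if e ∈ S then ({true} : Set Bool) else Set.univ)
        = if e ∈ S then ENNReal.ofReal p else 1 := by
    intro e; by_cases he : e ∈ S
    · simp [he, bern_true]
    · simpa [he] using measure_univ (μ := bern p)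
  rw [Finset.prod_congr rfl (fun e _ => this e)]
  rw [Finset.prod_ite_mem, Finset.univ_inter, Finset.prod_const]

lemma measure_Q_le (n₁ n₂ j : ℕ) {p : ℝ} (h0 : 0 ≤ p) (h1 : p ≤ 1)
    (xy : (Fin j → Fin n₁) × (Fin j → Fin n₂)) :
    bipMeasure n₁ n₂ p {ω | Function.Injective (Sum.elim (fun t => (xy.1 t, xy.2 t))
      (fun t => (xy.1 (cyc t), xy.2 t)) : Fin j ⊕ Fin j → Fin n₁ × Fin n₂) ∧
      ∀ t : Fin j, ω (xy.1 t, xy.2 t) = true ∧ ω (xy.1 (cyc t), xy.2 t) = true}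
      ≤ ENNReal.ofReal p ^ (2 * j) := by
  classical
  set f : Fin j ⊕ Fin j → Fin n₁ × Fin n₂ :=
    Sum.elim (fun t => (xy.1 t, xy.2 t)) (fun t => (xy.1 (cyc t), xy.2 t)) with hf
  by_cases hinj : Function.Injective f
  · have hset : {ω : Fin n₁ × Fin n₂ → Bool | Function.Injective f ∧
        ∀ t : Fin j, ω (xy.1 t, xy.2 t) = true ∧ ω (xy.1 (cyc t), xy.2 t) = true}
        = {ω | ∀ e ∈ Finset.image f Finset.univ, ω e = true} := by
      ext ω
      simp only [Set.mem_setOf_eq]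
      constructor
      · rintro ⟨-, h⟩ e he
        rw [Finset.mem_image] at he
        obtain ⟨s, -, rfl⟩ := he
        cases s with
        | inl t => exact (h t).1
        | inr t => exact (h t).2
      · intro h
        refine ⟨hinj, fun t => ⟨?_, ?_⟩⟩
        · exact h _ (Finset.mem_image_of_mem f (Finset.mem_univ (Sum.inl t)))
        · exact h _ (Finset.mem_image_of_mem f (Finset.mem_univ (Sum.inr t)))
    have hcard : (Finset.image f Finset.univ).card = 2 * j := by
      rw [Finset.card_image_of_injective _ hinj, Finset.card_univ, Fintype.card_sum,
        Fintype.card_fin, two_mul]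
    apply le_of_eq
    rw [hset, bipMeasure_forall_true n₁ n₂ h0 h1, hcard]
  · have : {ω : Fin n₁ × Fin n₂ → Bool | Function.Injective f ∧
        ∀ t : Fin j, ω (xy.1 t, xy.2 t) = true ∧ ω (xy.1 (cyc t), xy.2 t) = true} = ∅ := by
      ext ω; simp [hinj]
    rw [this]
    simp

lemma lintegral_trailCount_le (n₁ n₂ j : ℕ) {p : ℝ} (h0 : 0 ≤ p) (h1 : p ≤ 1) :
    ∫⁻ ω, (trailCount j ω : ℝ≥0∞) ∂ bipMeasure n₁ n₂ p
      ≤ ((n₁ : ℝ≥0∞) * n₂) ^ j * ENNReal.ofReal p ^ (2 * j) := by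
  classical
  set Q : ((Fin j → Fin n₁) × (Fin j → Fin n₂)) → (Fin n₁ × Fin n₂ → Bool) → Prop :=
    fun xy ω => Function.Injective (Sum.elim (fun t => (xy.1 t, xy.2 t))
      (fun t => (xy.1 (cyc t), xy.2 t)) : Fin j ⊕ Fin j → Fin n₁ × Fin n₂) ∧
      ∀ t : Fin j, ω (xy.1 t, xy.2 t) = true ∧ ω (xy.1 (cyc t), xy.2 t) = true with hQ
  have hcount : ∀ ω, (trailCount j ω : ℝ≥0∞)
      = ∑ xy : (Fin j → Fin n₁) × (Fin j → Fin n₂), if Q xy ω then 1 else 0 := by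
    intro ω
    rw [trailCount, Nat.card_eq_fintype_card, Fintype.card_subtype]
    rw [Finset.card_filter]
    push_cast
    rfl
  calc ∫⁻ ω, (trailCount j ω : ℝ≥0∞) ∂ bipMeasure n₁ n₂ p
      = ∑ xy : (Fin j → Fin n₁) × (Fin j → Fin n₂),
          ∫⁻ ω, (if Q xy ω then 1 else 0) ∂ bipMeasure n₁ n₂ p := by
        simp_rw [hcount]
        exact lintegral_finset_sum _ (fun xy _ => measurable_of_countable _)
    _ ≤ ∑ xy : (Fin j → Fin n₁) × (Fin j → Fin n₂), ENNReal.ofReal p ^ (2 * j) := by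
        apply Finset.sum_le_sum
        intro xy _
        have : (fun ω => (if Q xy ω then (1:ℝ≥0∞) else 0))
            = Set.indicator {ω | Q xy ω} 1 := by
          ext ω; by_cases h : Q xy ω <;> simp [h, Set.indicator_apply]
        rw [this, lintegral_indicator_one ((Set.toFinite _).measurableSet)]
        exact measure_Q_le n₁ n₂ j h0 h1 xy
    _ = ((n₁ : ℝ≥0∞) * n₂) ^ j * ENNReal.ofReal p ^ (2 * j) := by
        rw [Finset.sum_const, Finset.card_univ, Fintype.card_prod, Fintype.card_fun,
          Fintype.card_fun, Fintype.card_fin, Fintype.card_fin, Fintype.card_fin]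
        simp [mul_pow, nsmul_eq_mul]

/-- The number `X` of closed trails of (even) length at most `2i`. -/
noncomputable def closedTrailsUpTo {n₁ n₂ : ℕ} (i : ℕ)
    (ω : Fin n₁ × Fin n₂ → Bool) : ℕ :=
  ∑ j ∈ Finset.Icc 2 i, trailCount j ω

/-- Let `X` be the number of closed trails of length at most `2i` in
`G ∈ G_{n₁,n₂,p}`, where `n₂ = Θ(n₁)` and
`(n₁n₂)^{−i/(2i+1)} ≪ p ≪ (n₁n₂)^{−(i−1)/(2i−1)}` for a fixed `i ≥ 2`.  Then
for every fixed `δ > 0`, `P(X ≥ δ·p·n₁·n₂) → 0` as `n₁ → ∞`. -/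
theorem short_closed_trails_rare (i : ℕ) (hi : 2 ≤ i)
    (n₁ n₂ : ℕ → ℕ) (p : ℕ → ℝ) (hp : ∀ k, 0 ≤ p k ∧ p k ≤ 1)
    (hΘ : ∃ c : ℝ, 0 < c ∧ ∀ k, (n₁ k : ℝ) ≤ c * n₂ k ∧ (n₂ k : ℝ) ≤ c * n₁ k)
    (hn₁ : Tendsto n₁ atTop atTop)
    (hplarge : Tendsto
      (fun k => p k * ((n₁ k : ℝ) * n₂ k) ^ ((i : ℝ) / (2 * i + 1)))
      atTop atTop)
    (hpsmall : Tendsto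
      (fun k => p k * ((n₁ k : ℝ) * n₂ k) ^ (((i : ℝ) - 1) / (2 * i - 1)))
      atTop (nhds 0))
    (δ : ℝ) (hδ : 0 < δ) :
    Tendsto
      (fun k => bipMeasure (n₁ k) (n₂ k) (p k)
        {ω | δ * (p k * n₁ k * n₂ k) ≤ (closedTrailsUpTo i ω : ℝ)})
      atTop (nhds 0) := by
  classical
  obtain ⟨c, hc, hcb⟩ := hΘ
  set a : ℕ → ℝ := fun k =>
    p k * ((n₁ k : ℝ) * n₂ k) ^ (((i : ℝ) - 1) / (2 * i - 1)) with ha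
  have E2 : ∀ᶠ k in atTop, 1 ≤ n₁ k := hn₁.eventually_ge_atTop 1
  have E1 : ∀ᶠ k in atTop, 0 < p k := by
    filter_upwards [hplarge.eventually_ge_atTop 1] with k hk
    rcases (hp k).1.lt_or_eq with h | h
    · exact h
    · exfalso; rw [← h] at hk; norm_num at hk
  have E3 : ∀ᶠ k in atTop, 1 ≤ n₂ k := by
    filter_upwards [E2] with k hk
    by_contra h
    have h2 : n₂ k = 0 := by omega
    have := (hcb k).1
    rw [h2] at this
    have h1 : (1 : ℝ) ≤ (n₁ k : ℝ) := by exact_mod_cast hk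
    push_cast at this
    linarith
  have E4 : ∀ᶠ k in atTop, a k < 1 :=
    hpsmall.eventually_lt_const (by norm_num : (0:ℝ) < 1)
  -- the key eventual bound
  have key : ∀ᶠ k in atTop,
      bipMeasure (n₁ k) (n₂ k) (p k)
        {ω | δ * (p k * n₁ k * n₂ k) ≤ (closedTrailsUpTo i ω : ℝ)}
        ≤ ENNReal.ofReal ((i : ℝ) * a k ^ 3 / δ) := by
    filter_upwards [E1, E2, E3, E4] with k hpk hn1k hn2k hak
    set N : ℝ := (n₁ k : ℝ) * n₂ k with hN
    have hN1 : (1 : ℝ) ≤ N := by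
      have h1 : (1 : ℝ) ≤ (n₁ k : ℝ) := by exact_mod_cast hn1k
      have h2 : (1 : ℝ) ≤ (n₂ k : ℝ) := by exact_mod_cast hn2k
      nlinarith
    have hN0 : (0 : ℝ) < N := lt_of_lt_of_le one_pos hN1
    have hc0 : (0 : ℝ) < δ * (p k * n₁ k * n₂ k) := by
      have : (0:ℝ) < p k * n₁ k * n₂ k := by
        have := mul_pos hpk hN0; rw [hN] at this; nlinarith
      exact mul_pos hδ this
    have ha0 : 0 ≤ a k := by
      apply mul_nonneg (hp k).1
      exact Real.rpow_nonneg (le_of_lt hN0) _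
    -- rewrite the event in ENNReal form
    have hev : {ω : Fin (n₁ k) × Fin (n₂ k) → Bool |
        δ * (p k * n₁ k * n₂ k) ≤ (closedTrailsUpTo i ω : ℝ)}
        = {ω | ENNReal.ofReal (δ * (p k * n₁ k * n₂ k))
            ≤ ((closedTrailsUpTo i ω : ℕ) : ENNReal)} := by
      ext ω
      simp only [Set.mem_setOf_eq]
      rw [← ENNReal.ofReal_natCast, ENNReal.ofReal_le_ofReal_iff (Nat.cast_nonneg _)]
    rw [hev]
    -- Markov
    have markov := meas_ge_le_lintegral_div
      (μ := bipMeasure (n₁ k) (n₂ k) (p k))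
      (f := fun ω => ((closedTrailsUpTo i ω : ℕ) : ENNReal))
      (measurable_of_countable _).aemeasurable
      (ne_of_gt (ENNReal.ofReal_pos.mpr hc0)) ENNReal.ofReal_ne_top
    refine le_trans markov ?_
    -- bound the integral
    have hint : ∫⁻ ω, ((closedTrailsUpTo i ω : ℕ) : ENNReal)
        ∂ bipMeasure (n₁ k) (n₂ k) (p k)
        ≤ ENNReal.ofReal (∑ j ∈ Finset.Icc 2 i, N ^ j * p k ^ (2 * j)) := by
      have : ∫⁻ ω, ((closedTrailsUpTo i ω : ℕ) : ENNReal)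
          ∂ bipMeasure (n₁ k) (n₂ k) (p k)
          = ∑ j ∈ Finset.Icc 2 i, ∫⁻ ω, ((trailCount j ω : ℕ) : ENNReal)
            ∂ bipMeasure (n₁ k) (n₂ k) (p k) := by
        simp_rw [closedTrailsUpTo, Nat.cast_sum]
        exact lintegral_finset_sum _ (fun j _ => measurable_of_countable _)
      rw [this, ENNReal.ofReal_sum_of_nonneg]
      · apply Finset.sum_le_sum
        intro j _
        refine le_trans (lintegral_trailCount_le _ _ j (hp k).1 (hp k).2) ?_
        apply le_of_eq
        rw [ENNReal.ofReal_mul (by positivity), ENNReal.ofReal_pow (le_of_lt hN0),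
          ENNReal.ofReal_pow (hp k).1, hN, ENNReal.ofReal_mul (Nat.cast_nonneg _),
          ENNReal.ofReal_natCast, ENNReal.ofReal_natCast]
      · intro j _
        positivity
    refine le_trans (ENNReal.div_le_div_right hint _) ?_
    rw [← ENNReal.ofReal_div_of_pos hc0]
    apply ENNReal.ofReal_le_ofReal
    -- now a purely real inequality
    set B : ℝ := ∑ j ∈ Finset.Icc 2 i, N ^ j * p k ^ (2 * j) with hB
    have hterm : ∀ j ∈ Finset.Icc 2 i,
        N ^ j * p k ^ (2 * j) ≤ a k ^ 3 * (p k * N) := by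
      intro j hj
      rw [Finset.mem_Icc] at hj
      obtain ⟨hj2, hji⟩ := hj
      have hjR : (2:ℝ) ≤ (j:ℝ) := by exact_mod_cast hj2
      have hiR : (j:ℝ) ≤ (i:ℝ) := by exact_mod_cast hji
      set e : ℝ := ((j:ℝ) - 1) / (2 * j - 1) with he
      have hden : (0:ℝ) < 2 * (j:ℝ) - 1 := by linarith
      have hdenI : (0:ℝ) < 2 * (i:ℝ) - 1 := by linarith
      have hee : e ≤ ((i:ℝ) - 1) / (2 * i - 1) := by
        rw [he, div_le_div_iff₀ hden hdenI]
        nlinarith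
      have hkey : N ^ j * p k ^ (2 * j)
          = (p k * N ^ e) ^ (2 * j - 1) * (p k * N) := by
        have hNe : (N ^ e) ^ (2 * j - 1) = N ^ (j - 1) := by
          rw [← Real.rpow_natCast (N ^ e) (2 * j - 1), ← Real.rpow_mul (le_of_lt hN0)]
          have h1 : ((2 * j - 1 : ℕ) : ℝ) = 2 * (j:ℝ) - 1 := by
            push_cast [Nat.cast_sub (by omega : 1 ≤ 2 * j)]; ring
          have h2 : ((j - 1 : ℕ) : ℝ) = (j:ℝ) - 1 := by
            push_cast [Nat.cast_sub (by omega : 1 ≤ j)]; ring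
          rw [h1, ← Real.rpow_natCast N (j-1), h2, he]
          congr 1
          field_simp
          exact mul_div_cancel_right₀ _ (ne_of_gt (by linarith))
        rw [mul_pow (p k) (N ^ e) (2 * j - 1), hNe]
        have e1 : 2 * j = (2 * j - 1) + 1 := by omega
        have e2 : j = (j - 1) + 1 := by omega
        calc N ^ j * p k ^ (2 * j) = N ^ ((j-1)+1) * p k ^ ((2*j-1)+1) := by
              rw [← e1, ← e2]
          _ = p k ^ (2*j-1) * N ^ (j-1) * (p k * N) := by
              rw [pow_succ, pow_succ]; ring
      rw [hkey]
      have hle : p k * N ^ e ≤ a k := by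
        apply mul_le_mul_of_nonneg_left _ (hp k).1
        exact Real.rpow_le_rpow_of_exponent_le hN1 hee
      have hpow : (p k * N ^ e) ^ (2 * j - 1) ≤ a k ^ (2 * j - 1) := by
        apply pow_le_pow_left₀ _ hle
        positivity
      have hpow2 : a k ^ (2 * j - 1) ≤ a k ^ 3 :=
        pow_le_pow_of_le_one ha0 (le_of_lt hak) (by omega)
      have hNp : (0:ℝ) ≤ p k * N := le_of_lt (mul_pos hpk hN0)
      calc (p k * N ^ e) ^ (2 * j - 1) * (p k * N)
          ≤ a k ^ (2 * j - 1) * (p k * N) :=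
            mul_le_mul_of_nonneg_right hpow hNp
        _ ≤ a k ^ 3 * (p k * N) := mul_le_mul_of_nonneg_right hpow2 hNp
    have hBsum : B ≤ (i : ℝ) * (a k ^ 3 * (p k * N)) := by
      refine le_trans (Finset.sum_le_sum hterm) ?_
      rw [Finset.sum_const, Nat.card_Icc, nsmul_eq_mul]
      apply mul_le_mul_of_nonneg_right _ (by positivity)
      have : ((i + 1 - 2 : ℕ) : ℝ) ≤ (i : ℝ) := by
        have : i + 1 - 2 ≤ i := by omega
        exact_mod_cast this
      exact this
    have hpN : p k * (n₁ k : ℝ) * n₂ k = p k * N := by rw [hN]; ring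
    rw [hpN]
    rw [div_le_div_iff₀ (by positivity) hδ]
    calc B * δ ≤ ((i:ℝ) * (a k ^ 3 * (p k * N))) * δ :=
          mul_le_mul_of_nonneg_right hBsum (le_of_lt hδ)
      _ = (i:ℝ) * a k ^ 3 * (δ * (p k * N)) := by ring
  -- conclude by squeezing
  have hlim : Tendsto (fun k => ENNReal.ofReal ((i : ℝ) * a k ^ 3 / δ)) atTop (nhds 0) := by
    have h3 : Tendsto (fun k => a k ^ 3) atTop (nhds 0) := by
      have := hpsmall.pow 3
      simpa using this
    have h4 : Tendsto (fun k => (i : ℝ) * a k ^ 3 / δ) atTop (nhds 0) := by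
      have := (h3.const_mul (i:ℝ)).div_const δ
      simpa using this
    have := ENNReal.tendsto_ofReal h4
    simpa using this
  exact tendsto_of_tendsto_of_tendsto_of_le_of_le' tendsto_const_nhds hlim
    (Eventually.of_forall fun k => zero_le) key
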